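/- Fix ν ∈ H⁺ and let S be a selective cost with Lipschitz constant K that is bounded and concave. Suppose there are a constant ξ > 0 and a Borel function τ : ℳ → [0,∞) such that S(g + δ_{m′}) − S(g) ≤ ξ·(1 − e^{−τ(m′)})·exp(−∫_ℳ τ dg) for all g ∈ 𝒢 and m′ ∈ ℳ. If ν(ℳ) > e^{−1}·ξ, then the unique solution ρ of the mutation–selection dynamics with initial condition ρ₀ = 0 satisfies lim_{t→∞} ρ_t(ℳ) = ∞. -/

import Mathlib

open MeasureTheory Set Filter
open scoped ENNReal NNReal

noncomputable section

namespace MSEW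

/-- `LipLE dE f c` : the bounded-Lipschitz norm of `f`, namely
`sup_x |f x| + sup_{x ≠ y} |f x - f y| / dE x y`, is at most `c`;
phrased without suprema, relative to an abstract distance function `dE`. -/
def LipLE {E : Type*} (dE : E → E → ℝ) (f : E → ℝ) (c : ℝ) : Prop :=
  ∃ a b : ℝ, 0 ≤ a ∧ 0 ≤ b ∧ a + b ≤ c ∧ (∀ x, |f x| ≤ a) ∧
    ∀ x y, |f x - f y| ≤ b * dE x y

/-- Integral of `f : E → ℝ` against a finite integer-valued measure, represented
as the multiset of its atoms (a genotype). -/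
def gInt {E : Type*} (g : Multiset E) (f : E → ℝ) : ℝ := (g.map f).sum

/-- The mass `g(A)` that a genotype `g` assigns to a set `A`. -/
def gMass {E : Type*} (g : Multiset E) (A : Set E) : ℝ := gInt g (A.indicator 1)

/-- The σ-algebra on genotypes generated by the counting functionals
`g ↦ g(A)` for measurable `A`. -/
instance multisetMeasurableSpace {E : Type*} [MeasurableSpace E] :
    MeasurableSpace (Multiset E) :=
  MeasurableSpace.generateFrom
    { s | ∃ (A : Set E) (n : ℕ), MeasurableSet A ∧ s = { g : Multiset E | gMass g A = n } }

/-- Wasserstein distance between two (finite) measures: the supremum of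
differences of integrals of test functions of bounded-Lipschitz norm at most one. -/
def wasDist {E : Type*} [MeasurableSpace E] (dE : E → E → ℝ) (P Q : Measure E) : ℝ :=
  sSup { r | ∃ f : E → ℝ, LipLE dE f 1 ∧ r = |∫ x, f x ∂P - ∫ x, f x ∂Q| }

/-- Wasserstein norm of a finite signed measure, `sup { |∫ f dπ| : ‖f‖_Lip ≤ 1 }`. -/
def wasNorm {E : Type*} [MeasurableSpace E] (dE : E → E → ℝ) (π : SignedMeasure E) : ℝ :=
  wasDist dE π.toJordanDecomposition.posPart π.toJordanDecomposition.negPart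

/-- The Wasserstein metric on genotypes, `d(g,h) = ‖g - h‖_Was`. -/
def dG {M : Type*} [MetricSpace M] (g h : Multiset M) : ℝ :=
  sSup { r | ∃ f : M → ℝ, LipLE dist f 1 ∧ r = |gInt g f - gInt h f| }

/-- The measure on `E` associated with a genotype: the finite sum of Dirac masses. -/
def genMeasure {E : Type*} [MeasurableSpace E] (g : Multiset E) : Measure E :=
  (g.map fun x => Measure.dirac x).sum

/-- The intensity measure `μP` of a law `P` on genotypes: `μP(A) = ∫ g(A) dP(g)`. -/
def intensity {E : Type*} [MeasurableSpace E] (P : Measure (Multiset E)) : Measure E :=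
  P.bind genMeasure

/-- The law `Π_π` of a Poisson random measure with intensity `π`:
`Π_π[F] = e^{-π(univ)} ∑_k (1/k!) ∫ F(δ_{x₁}+⋯+δ_{x_k}) dπ^{⊗k}`. -/
def poissonLaw {M : Type*} [MeasurableSpace M] (π : Measure M) : Measure (Multiset M) :=
  ENNReal.ofReal (Real.exp (-(π Set.univ).toReal)) •
    Measure.sum fun k : ℕ =>
      ((Nat.factorial k : ℝ≥0∞))⁻¹ •
        Measure.map (fun x : Fin k → M => ∑ i, ({x i} : Multiset M))
          (Measure.pi fun _ : Fin k => π)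

/-- A selective cost with Lipschitz constant `K`: a Borel function
`S : 𝒢 → [0,∞)` with `S(0) = 0`, monotone under adding mutations, and
Lipschitz with constant `K` for the Wasserstein metric on genotypes. -/
structure IsSelectiveCost {M : Type*} [MetricSpace M] [MeasurableSpace M]
    (S : Multiset M → ℝ) (K : ℝ) : Prop where
  measurable : Measurable S
  nonneg : ∀ g, 0 ≤ S g
  map_zero : S 0 = 0
  mono : ∀ g h, S g ≤ S (g + h)
  lip : ∀ g h, |S g - S h| ≤ K * dG g h

/-- `F_π(x) = E[S(X^π + δ_x) - S(X^π)]`. -/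
def Fcost {M : Type*} [MeasurableSpace M] (S : Multiset M → ℝ) (π : Measure M) (x : M) : ℝ :=
  ∫ g, (S (g + {x}) - S g) ∂(poissonLaw π)

/-- The kernel `K_ρ(m,m') = E[S(X^ρ+δ_m+δ_{m'}) - S(X^ρ+δ_{m'}) - S(X^ρ+δ_m) + S(X^ρ)]`. -/
def Kker {M : Type*} [MeasurableSpace M] (S : Multiset M → ℝ) (ρ : Measure M)
    (m m' : M) : ℝ :=
  ∫ g, (S (g + {m} + {m'}) - S (g + {m'}) - S (g + {m}) + S g) ∂(poissonLaw ρ)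

/-- The operator `D`: `Dπ` is the measure with density `F_π` with respect to `π`. -/
def Dop {M : Type*} [MeasurableSpace M] (S : Multiset M → ℝ) (ρ : Measure M) : Measure M :=
  ρ.withDensity fun x => ENNReal.ofReal (Fcost S ρ x)

/-- Concavity of a selective cost. -/
def ConcaveCost {M : Type*} (S : Multiset M → ℝ) : Prop :=
  ∀ g h k : Multiset M, S (g + h + k) - S (g + h) ≤ S (g + k) - S g

/-- A solution of the mutation–selection dynamics
`ρ_t(A) = ρ₀(A) + t·ν(A) - ∫₀ᵗ (Dρ_s)(A) ds`: a `‖⋅‖_Was`-continuous curve of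
finite nonnegative measures satisfying the integral equation for `t ≥ 0`. -/
def IsSolution {M : Type*} [MetricSpace M] [MeasurableSpace M]
    (S : Multiset M → ℝ) (ν ρ₀ : Measure M) (ρ : ℝ → Measure M) : Prop :=
  (∀ t, IsFiniteMeasure (ρ t)) ∧ ρ 0 = ρ₀ ∧
  (∀ t, 0 ≤ t → ∀ ε > (0:ℝ), ∃ δ > (0:ℝ), ∀ s, 0 ≤ s → |s - t| < δ →
     wasDist dist (ρ s) (ρ t) < ε) ∧
  ∀ t, 0 ≤ t → ∀ A : Set M, MeasurableSet A →
    ((ρ t) A).toReal = (ρ₀ A).toReal + t * (ν A).toReal -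
      ∫ s in (0:ℝ)..t, ((Dop S (ρ s)) A).toReal

/-- The mutation operator `𝔐_n`: add an independent Poisson cloud of new
mutations with intensity `ν/n`. -/
def mutOp {M : Type*} [MeasurableSpace M] (ν : Measure M) (n : ℕ)
    (P : Measure (Multiset M)) : Measure (Multiset M) :=
  Measure.map (fun p : Multiset M × Multiset M => p.1 + p.2)
    (P.prod (poissonLaw (((n : ℝ≥0∞))⁻¹ • ν)))

/-- The selection operator `𝔖_n`: reweight by `e^{-S/n}` and renormalize. -/
def selOp {M : Type*} [MeasurableSpace M] (S : Multiset M → ℝ) (n : ℕ)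
    (P : Measure (Multiset M)) : Measure (Multiset M) :=
  (∫⁻ g, ENNReal.ofReal (Real.exp (-S g / (n : ℝ))) ∂P)⁻¹ •
    P.withDensity fun g => ENNReal.ofReal (Real.exp (-S g / (n : ℝ)))

/-- The complete Poissonization operator `𝔓P = Π_{μP}`. -/
def poisOp {M : Type*} [MeasurableSpace M] (P : Measure (Multiset M)) :
    Measure (Multiset M) :=
  poissonLaw (intensity P)

/-- Restriction `g_B` of a genotype to a set: `g_B(A) = g(A ∩ B)`. -/
def restrictMS {M : Type*} (g : Multiset M) (B : Set M) : Multiset M :=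
  @Multiset.filter M (· ∈ B) (Classical.decPred _) g

/-- The random segregating set determined by a jointly measurable indicator. -/
def segSet {Ω M : Type*} (χ : Ω × M → Bool) (ω : Ω) : Set M :=
  { x | χ (ω, x) = true }

/-- The recombination operator `ℛ`. -/
def recOp {M Ω : Type*} [MeasurableSpace M] [MeasurableSpace Ω]
    (Pr : Measure Ω) (R : Ω → Set M) (P : Measure (Multiset M)) : Measure (Multiset M) :=
  Measure.map (fun q : Ω × Multiset M × Multiset M =>
      restrictMS q.2.1 (R q.1) + restrictMS q.2.2 ((R q.1)ᶜ))
    (Pr.prod (P.prod P))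

/-- Symmetry of a recombination mechanism: the segregating set and its
complement are identically distributed as random sets. -/
def IsSymmetricMech {M Ω : Type*} [MeasurableSpace M] [MeasurableSpace Ω]
    (Pr : Measure Ω) (R : Ω → Set M) : Prop :=
  ∀ lam : Measure M, IsFiniteMeasure lam → ∀ (p : ℕ) (B : Fin p → Set M),
    (∀ i, MeasurableSet (B i)) →
    Measure.map (fun ω => fun i => (lam (B i ∩ R ω)).toReal) Pr =
    Measure.map (fun ω => fun i => (lam (B i ∩ (R ω)ᶜ)).toReal) Pr

/-- `(ℛ, λ)` is shattering with constant `α`: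
`λ(A)³ ≤ 2α·E[λ(A ∩ R)·λ(A ∩ Rᶜ)]` for every Borel `A`. -/
def IsShattering {M Ω : Type*} [MeasurableSpace M] [MeasurableSpace Ω]
    (Pr : Measure Ω) (R : Ω → Set M) (lam : Measure M) (α : ℝ) : Prop :=
  ∀ A : Set M, MeasurableSet A →
    (lam A).toReal ^ 3 ≤
      2 * α * ∫ ω, (lam (A ∩ R ω)).toReal * (lam (A ∩ (R ω)ᶜ)).toReal ∂Pr

variable {M : Type*} [MetricSpace M] [CompleteSpace M] [TopologicalSpace.SeparableSpace M]
  [MeasurableSpace M] [BorelSpace M]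
section Aux

open scoped BigOperators

lemma gInt_add' {E : Type*} (g h : Multiset E) (f : E → ℝ) :
    gInt (g + h) f = gInt g f + gInt h f := by
  simp [gInt]

lemma gInt_singleton' {E : Type*} (x : E) (f : E → ℝ) : gInt {x} f = f x := by
  simp [gInt]

lemma gMass_nonneg' {E : Type*} (g : Multiset E) (A : Set E) : 0 ≤ gMass g A := by
  refine Multiset.sum_nonneg fun r hr => ?_
  obtain ⟨y, -, rfl⟩ := Multiset.mem_map.mp hr
  exact Set.indicator_nonneg (fun _ _ => zero_le_one) y

/-- `gInt · f` as an additive monoid hom. -/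
def gIntHom' {E : Type*} (f : E → ℝ) : Multiset E →+ ℝ where
  toFun g := gInt g f
  map_zero' := by simp [gInt]
  map_add' g h := gInt_add' g h f

lemma gInt_finsum {E ι : Type*} (s : Finset ι) (m : ι → E) (f : E → ℝ) :
    gInt (∑ i ∈ s, ({m i} : Multiset E)) f = ∑ i ∈ s, f (m i) := by
  classical
  induction s using Finset.induction with
  | empty => simp [gInt]
  | insert _ _ hx ih =>
    rw [Finset.sum_insert hx, Finset.sum_insert hx, gInt_add', gInt_singleton', ih]

lemma measurable_add_singleton {E : Type*} [MeasurableSpace E] (x : E) :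
    Measurable (fun g : Multiset E => g + {x}) := by
  apply measurable_generateFrom
  rintro s ⟨A, n, hA, rfl⟩
  have hset : (fun g : Multiset E => g + {x}) ⁻¹' {g | gMass g A = n}
      = {g : Multiset E | gMass g A + A.indicator 1 x = n} := by
    ext g
    simp only [Set.mem_preimage, Set.mem_setOf_eq, gMass, gInt_add', gInt_singleton']
  rw [hset]
  by_cases hx : x ∈ A
  · rw [Set.indicator_of_mem hx, Pi.one_apply]
    cases n with
    | zero =>
      convert MeasurableSet.empty
      ext g
      simp only [Set.mem_setOf_eq, Set.mem_empty_iff_false, iff_false]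
      intro h
      have h0 := gMass_nonneg' g A
      push_cast at h
      linarith
    | succ k =>
      have : {g : Multiset E | gMass g A + 1 = ((k + 1 : ℕ) : ℝ)}
          = {g : Multiset E | gMass g A = ((k : ℕ) : ℝ)} := by
        ext g
        simp only [Set.mem_setOf_eq]
        push_cast
        constructor <;> intro h <;> linarith
      rw [this]
      exact MeasurableSpace.measurableSet_generateFrom ⟨A, k, hA, rfl⟩
  · simp only [Set.indicator_of_notMem hx, add_zero]
    exact MeasurableSpace.measurableSet_generateFrom ⟨A, n, hA, rfl⟩

lemma lintegral_map_le' {α β : Type*} [MeasurableSpace α] [MeasurableSpace β]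
    (μ : MeasureTheory.Measure α) (f : β → ℝ≥0∞) (g : α → β) :
    ∫⁻ b, f b ∂(Measure.map g μ) ≤ ∫⁻ a, f (g a) ∂μ := by
  by_cases hg : AEMeasurable g μ
  · calc ∫⁻ b, f b ∂(Measure.map g μ) = ∫⁻ b, f b ∂(Measure.map (hg.mk g) μ) := by
          rw [Measure.map_congr hg.ae_eq_mk]
    _ ≤ ∫⁻ a, f (hg.mk g a) ∂μ := lintegral_map_le f (hg.mk g)
    _ = ∫⁻ a, f (g a) ∂μ :=
        lintegral_congr_ae (hg.ae_eq_mk.symm.mono fun a ha => by simp [ha])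
  · rw [Measure.map_of_not_aemeasurable hg]; simp

lemma lintegral_pi_prod {E : Type*} [MeasurableSpace E] (π : Measure E) [SigmaFinite π]
    {ψ : E → ℝ≥0∞} (hψ : Measurable ψ) :
    ∀ k : ℕ, ∫⁻ x : Fin k → E, ∏ i, ψ (x i) ∂(Measure.pi fun _ => π)
      = (∫⁻ y, ψ y ∂π) ^ k
  | 0 => by
    simp [Measure.pi_univ]
  | (n + 1) => by
    have hmp := measurePreserving_piFinSuccAbove (fun _ : Fin (n + 1) => (π : Measure E)) 0
    have h1 : ∫⁻ x : Fin (n + 1) → E, ∏ i, ψ (x i) ∂(Measure.pi fun _ => π)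
        = ∫⁻ x : Fin (n + 1) → E, ψ (x 0) * ∏ j : Fin n, ψ (x ((0 : Fin (n + 1)).succAbove j))
            ∂(Measure.pi fun _ => π) := by
      congr 1; funext x; exact Fin.prod_univ_succAbove (fun i => ψ (x i)) 0
    have h2 := hmp.lintegral_map_equiv
      (fun y : E × (Fin n → E) => ψ y.1 * ∏ j, ψ (y.2 j))
      (MeasurableEquiv.piFinSuccAbove (fun _ : Fin (n + 1) => E) 0)
    rw [h1]
    have h3 : ∫⁻ y : E × (Fin n → E), ψ y.1 * ∏ j, ψ (y.2 j)
          ∂(π.prod (Measure.pi fun _ : Fin n => π))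
        = (∫⁻ y, ψ y ∂π) * ∫⁻ x : Fin n → E, ∏ j, ψ (x j) ∂(Measure.pi fun _ => π) :=
      lintegral_prod_mul hψ.aemeasurable
        (Finset.measurable_prod Finset.univ fun j _ => hψ.comp (measurable_pi_apply j)).aemeasurable
    have h4 : ∫⁻ x : Fin (n + 1) → E,
          ψ (x 0) * ∏ j : Fin n, ψ (x ((0 : Fin (n + 1)).succAbove j))
            ∂(Measure.pi fun _ => π)
        = ∫⁻ y : E × (Fin n → E), ψ y.1 * ∏ j, ψ (y.2 j)
            ∂(π.prod (Measure.pi fun _ : Fin n => π)) := h2.symm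
    rw [h4, h3, lintegral_pi_prod π hψ n, pow_succ']

end Aux
section Aux2

lemma tsum_fact_pow (a : ℝ) (ha : 0 ≤ a) :
    ∑' k : ℕ, ((Nat.factorial k : ℝ≥0∞))⁻¹ * ENNReal.ofReal a ^ k
      = ENNReal.ofReal (Real.exp a) := by
  have hterm : ∀ k : ℕ, ((Nat.factorial k : ℝ≥0∞))⁻¹ * ENNReal.ofReal a ^ k
      = ENNReal.ofReal (a ^ k / Nat.factorial k) := by
    intro k
    rw [← ENNReal.ofReal_natCast (Nat.factorial k),
      ← ENNReal.ofReal_inv_of_pos (by positivity), ← ENNReal.ofReal_pow ha,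
      ← ENNReal.ofReal_mul (by positivity)]
    congr 1
    rw [inv_mul_eq_div]
  simp_rw [hterm]
  rw [← ENNReal.ofReal_tsum_of_nonneg (fun k => by positivity)
      (Real.summable_pow_div_factorial a)]
  congr 1
  rw [Real.exp_eq_exp_ℝ, NormedSpace.exp_eq_tsum_div]

lemma poissonLaw_lintegral_le {E : Type*} [MeasurableSpace E]
    (π : Measure E) [IsFiniteMeasure π]
    (f : Multiset E → ℝ≥0∞) {ψ : E → ℝ≥0∞} (hψ : Measurable ψ) (hψ1 : ∀ y, ψ y ≤ 1)
    (hf : ∀ (k : ℕ) (x : Fin k → E), f (∑ i, ({x i} : Multiset E)) ≤ ∏ i, ψ (x i)) :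
    ∫⁻ g, f g ∂(poissonLaw π)
      ≤ ENNReal.ofReal
          (Real.exp ((∫⁻ y, ψ y ∂π).toReal - (π Set.univ).toReal)) := by
  set A := ∫⁻ y, ψ y ∂π with hA
  have hAle : A ≤ π Set.univ := by
    calc A ≤ ∫⁻ _, 1 ∂π := lintegral_mono hψ1
    _ = π Set.univ := by simp
  have hAtop : A ≠ ∞ := (hAle.trans_lt (measure_lt_top _ _)).ne
  have hAofReal : A = ENNReal.ofReal A.toReal := (ENNReal.ofReal_toReal hAtop).symm
  have key : ∀ k : ℕ,
      ∫⁻ g, f g ∂(Measure.map (fun x : Fin k → E => ∑ i, ({x i} : Multiset E))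
        (Measure.pi fun _ : Fin k => π)) ≤ A ^ k := by
    intro k
    calc ∫⁻ g, f g ∂(Measure.map (fun x : Fin k → E => ∑ i, ({x i} : Multiset E))
          (Measure.pi fun _ : Fin k => π))
        ≤ ∫⁻ x : Fin k → E, f (∑ i, ({x i} : Multiset E)) ∂(Measure.pi fun _ => π) :=
          lintegral_map_le' _ _ _
      _ ≤ ∫⁻ x : Fin k → E, ∏ i, ψ (x i) ∂(Measure.pi fun _ => π) :=
          lintegral_mono fun x => hf k x
      _ = A ^ k := lintegral_pi_prod π hψ k
  calc ∫⁻ g, f g ∂(poissonLaw π)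
      = ENNReal.ofReal (Real.exp (-(π Set.univ).toReal)) *
          ∑' k : ℕ, ((Nat.factorial k : ℝ≥0∞))⁻¹ *
            ∫⁻ g, f g ∂(Measure.map (fun x : Fin k → E => ∑ i, ({x i} : Multiset E))
              (Measure.pi fun _ : Fin k => π)) := by
        rw [poissonLaw, lintegral_smul_measure, lintegral_sum_measure]
        congr 1
        refine tsum_congr fun k => ?_
        rw [lintegral_smul_measure, smul_eq_mul]
    _ ≤ ENNReal.ofReal (Real.exp (-(π Set.univ).toReal)) *
          ∑' k : ℕ, ((Nat.factorial k : ℝ≥0∞))⁻¹ * A ^ k := by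
        gcongr with k
        exact key k
    _ = ENNReal.ofReal (Real.exp (-(π Set.univ).toReal)) *
          ENNReal.ofReal (Real.exp A.toReal) := by
        conv_lhs => rw [hAofReal]
        rw [tsum_fact_pow A.toReal ENNReal.toReal_nonneg]
    _ = ENNReal.ofReal (Real.exp (A.toReal - (π Set.univ).toReal)) := by
        rw [← ENNReal.ofReal_mul (Real.exp_nonneg _), ← Real.exp_add]
        congr 1
        ring

end Aux2
section Aux3

variable {M : Type*} [MetricSpace M] [MeasurableSpace M] [BorelSpace M]

lemma Fcost_le_mul {S : Multiset M → ℝ} {K : ℝ} (hS : IsSelectiveCost S K)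
    {ξ : ℝ} (hξ : 0 < ξ) {τ : M → ℝ} (hτm : Measurable τ) (hτ0 : ∀ m, 0 ≤ τ m)
    (hupp : ∀ (g : Multiset M) (m' : M),
      S (g + {m'}) - S g ≤ ξ * (1 - Real.exp (-τ m')) * Real.exp (-(gInt g τ)))
    (π : Measure M) [IsFiniteMeasure π] (x : M) :
    Fcost S π x ≤ ξ * (1 - Real.exp (-τ x)) *
      Real.exp ((∫⁻ y, ENNReal.ofReal (Real.exp (-τ y)) ∂π).toReal
        - (π Set.univ).toReal) := by
  set ψ : M → ℝ≥0∞ := fun y => ENNReal.ofReal (Real.exp (-τ y)) with hψdef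
  have hψ : Measurable ψ := ENNReal.measurable_ofReal.comp (Real.measurable_exp.comp hτm.neg)
  have hψ1 : ∀ y, ψ y ≤ 1 := by
    intro y
    rw [hψdef, ← ENNReal.ofReal_one]
    exact ENNReal.ofReal_le_ofReal (Real.exp_le_one_iff.mpr (neg_nonpos.mpr (hτ0 y)))
  have hcx : 0 ≤ ξ * (1 - Real.exp (-τ x)) := by
    have : Real.exp (-τ x) ≤ 1 := Real.exp_le_one_iff.mpr (neg_nonpos.mpr (hτ0 x))
    nlinarith
  have hnn : ∀ g : Multiset M, 0 ≤ S (g + {x}) - S g := fun g => sub_nonneg.mpr (hS.mono g {x})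
  have hmeas : Measurable fun g : Multiset M => S (g + {x}) - S g :=
    (hS.measurable.comp (measurable_add_singleton x)).sub hS.measurable
  have hrepr : Fcost S π x
      = (∫⁻ g, ENNReal.ofReal (S (g + {x}) - S g) ∂(poissonLaw π)).toReal := by
    rw [Fcost]
    exact integral_eq_lintegral_of_nonneg_ae (Filter.Eventually.of_forall hnn)
      hmeas.aestronglyMeasurable
  have hφ : ∀ (k : ℕ) (y : Fin k → M),
      (fun g : Multiset M => ENNReal.ofReal (Real.exp (-(gInt g τ))))
        (∑ i, ({y i} : Multiset M)) ≤ ∏ i, ψ (y i) := by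
    intro k y
    have h1 : gInt (∑ i, ({y i} : Multiset M)) τ = ∑ i, τ (y i) := gInt_finsum _ _ _
    simp only [h1]
    rw [← Finset.sum_neg_distrib, Real.exp_sum,
      ENNReal.ofReal_prod_of_nonneg (fun i _ => Real.exp_nonneg _)]
  have hlap : ∫⁻ g, ENNReal.ofReal (Real.exp (-(gInt g τ))) ∂(poissonLaw π)
      ≤ ENNReal.ofReal (Real.exp ((∫⁻ y, ψ y ∂π).toReal - (π Set.univ).toReal)) :=
    poissonLaw_lintegral_le π _ hψ hψ1 hφ
  have hbound : ∫⁻ g, ENNReal.ofReal (S (g + {x}) - S g) ∂(poissonLaw π)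
      ≤ ENNReal.ofReal (ξ * (1 - Real.exp (-τ x))) *
        ENNReal.ofReal (Real.exp ((∫⁻ y, ψ y ∂π).toReal - (π Set.univ).toReal)) := by
    calc ∫⁻ g, ENNReal.ofReal (S (g + {x}) - S g) ∂(poissonLaw π)
        ≤ ∫⁻ g, ENNReal.ofReal (ξ * (1 - Real.exp (-τ x)) * Real.exp (-(gInt g τ)))
            ∂(poissonLaw π) :=
          lintegral_mono fun g => ENNReal.ofReal_le_ofReal (hupp g x)
      _ = ∫⁻ g, ENNReal.ofReal (ξ * (1 - Real.exp (-τ x))) *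
            ENNReal.ofReal (Real.exp (-(gInt g τ))) ∂(poissonLaw π) := by
          congr 1; funext g; rw [ENNReal.ofReal_mul hcx]
      _ = ENNReal.ofReal (ξ * (1 - Real.exp (-τ x))) *
            ∫⁻ g, ENNReal.ofReal (Real.exp (-(gInt g τ))) ∂(poissonLaw π) :=
          lintegral_const_mul' _ _ ENNReal.ofReal_ne_top
      _ ≤ _ := by gcongr
  rw [hrepr]
  calc (∫⁻ g, ENNReal.ofReal (S (g + {x}) - S g) ∂(poissonLaw π)).toReal
      ≤ (ENNReal.ofReal (ξ * (1 - Real.exp (-τ x))) *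
          ENNReal.ofReal (Real.exp ((∫⁻ y, ψ y ∂π).toReal - (π Set.univ).toReal))).toReal :=
        ENNReal.toReal_mono (ENNReal.mul_ne_top ENNReal.ofReal_ne_top ENNReal.ofReal_ne_top)
          hbound
    _ = ξ * (1 - Real.exp (-τ x)) *
          Real.exp ((∫⁻ y, ψ y ∂π).toReal - (π Set.univ).toReal) := by
        rw [ENNReal.toReal_mul, ENNReal.toReal_ofReal hcx,
          ENNReal.toReal_ofReal (Real.exp_nonneg _)]

lemma Dop_univ_le {S : Multiset M → ℝ} {K : ℝ} (hS : IsSelectiveCost S K)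
    {ξ : ℝ} (hξ : 0 < ξ) {τ : M → ℝ} (hτm : Measurable τ) (hτ0 : ∀ m, 0 ≤ τ m)
    (hupp : ∀ (g : Multiset M) (m' : M),
      S (g + {m'}) - S g ≤ ξ * (1 - Real.exp (-τ m')) * Real.exp (-(gInt g τ)))
    (π : Measure M) [IsFiniteMeasure π] :
    ((Dop S π) Set.univ).toReal ≤ ξ * Real.exp (-1) := by
  set ψ : M → ℝ≥0∞ := fun y => ENNReal.ofReal (Real.exp (-τ y)) with hψdef
  have hψ : Measurable ψ := ENNReal.measurable_ofReal.comp (Real.measurable_exp.comp hτm.neg)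
  have hψ1 : ∀ y, ψ y ≤ 1 := by
    intro y
    rw [hψdef, ← ENNReal.ofReal_one]
    exact ENNReal.ofReal_le_ofReal (Real.exp_le_one_iff.mpr (neg_nonpos.mpr (hτ0 y)))
  set A := ∫⁻ y, ψ y ∂π with hA
  have hAle : A ≤ π Set.univ := by
    calc A ≤ ∫⁻ _, 1 ∂π := lintegral_mono hψ1
    _ = π Set.univ := by simp
  have hAtop : A ≠ ∞ := (hAle.trans_lt (measure_lt_top _ _)).ne
  set a := A.toReal with ha
  set c := (π Set.univ).toReal with hc
  set u := c - a with hu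
  have hu0 : 0 ≤ u := sub_nonneg.mpr (ENNReal.toReal_mono (measure_ne_top _ _) hAle)
  -- Dop S π univ = ∫⁻ ofReal (Fcost S π x) ∂π
  have hDop : (Dop S π) Set.univ = ∫⁻ y, ENNReal.ofReal (Fcost S π y) ∂π := by
    rw [Dop, withDensity_apply _ MeasurableSet.univ, Measure.restrict_univ]
  have hF : ∀ y : M, Fcost S π y ≤ ξ * Real.exp (-u) * (1 - Real.exp (-τ y)) := by
    intro y
    have := Fcost_le_mul hS hξ hτm hτ0 hupp π y
    calc Fcost S π y ≤ ξ * (1 - Real.exp (-τ y)) * Real.exp (a - c) := this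
      _ = ξ * Real.exp (-u) * (1 - Real.exp (-τ y)) := by rw [hu]; ring_nf
  have hsub : ∫⁻ y, ENNReal.ofReal (1 - Real.exp (-τ y)) ∂π = π Set.univ - A := by
    have h1 : ∀ y : M, ENNReal.ofReal (1 - Real.exp (-τ y)) = 1 - ψ y := by
      intro y
      rw [hψdef, ← ENNReal.ofReal_one, ← ENNReal.ofReal_sub _ (Real.exp_nonneg _)]
    simp_rw [h1]
    rw [lintegral_sub hψ hAtop (Filter.Eventually.of_forall hψ1)]
    simp
    rfl
  have hpos : 0 ≤ ξ * Real.exp (-u) := by positivity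
  have hbd : (Dop S π) Set.univ ≤ ENNReal.ofReal (ξ * Real.exp (-u)) * (π Set.univ - A) := by
    rw [hDop]
    calc ∫⁻ y, ENNReal.ofReal (Fcost S π y) ∂π
        ≤ ∫⁻ y, ENNReal.ofReal (ξ * Real.exp (-u) * (1 - Real.exp (-τ y))) ∂π :=
          lintegral_mono fun y => ENNReal.ofReal_le_ofReal (hF y)
      _ = ∫⁻ y, ENNReal.ofReal (ξ * Real.exp (-u)) *
            ENNReal.ofReal (1 - Real.exp (-τ y)) ∂π := by
          congr 1; funext y; rw [ENNReal.ofReal_mul hpos]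
      _ = ENNReal.ofReal (ξ * Real.exp (-u)) *
            ∫⁻ y, ENNReal.ofReal (1 - Real.exp (-τ y)) ∂π :=
          lintegral_const_mul' _ _ ENNReal.ofReal_ne_top
      _ = _ := by rw [hsub]
  have hRfin : ENNReal.ofReal (ξ * Real.exp (-u)) * (π Set.univ - A) ≠ ∞ :=
    ENNReal.mul_ne_top ENNReal.ofReal_ne_top
      ((tsub_le_self.trans_lt (measure_lt_top _ _)).ne)
  have htr : ((Dop S π) Set.univ).toReal
      ≤ ξ * Real.exp (-u) * u := by
    have h2 := ENNReal.toReal_mono hRfin hbd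
    rwa [ENNReal.toReal_mul, ENNReal.toReal_ofReal hpos,
      ENNReal.toReal_sub_of_le hAle (measure_ne_top _ _), ← hc, ← ha, ← hu] at h2
  refine htr.trans ?_
  have hue : u ≤ Real.exp (u - 1) := by
    have := Real.add_one_le_exp (u - 1)
    linarith
  calc ξ * Real.exp (-u) * u ≤ ξ * Real.exp (-u) * Real.exp (u - 1) := by
        have := Real.exp_nonneg (-u)
        nlinarith
    _ = ξ * Real.exp (-1) := by rw [mul_assoc, ← Real.exp_add]; ring_nf

end Aux3
theorem diverges_of_multiplicative_upper_bound (S : Multiset M → ℝ) (K : ℝ)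
    (hS : IsSelectiveCost S K) (hbdd : ∃ c : ℝ, ∀ g, S g ≤ c) (hconc : ConcaveCost S)
    (ν : Measure M) [IsFiniteMeasure ν]
    (ξ : ℝ) (hξ : 0 < ξ) (τ : M → ℝ) (hτm : Measurable τ) (hτ0 : ∀ m, 0 ≤ τ m)
    (hupp : ∀ (g : Multiset M) (m' : M),
      S (g + {m'}) - S g ≤ ξ * (1 - Real.exp (-τ m')) * Real.exp (-(gInt g τ)))
    (hν : Real.exp (-1) * ξ < (ν Set.univ).toReal)
    (ρ : ℝ → Measure M) (hsol : IsSolution S ν 0 ρ) :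
    Tendsto (fun t : ℝ => ((ρ t) Set.univ).toReal) atTop atTop := by
  obtain ⟨hfin, hinit, hcont, heq⟩ := hsol
  have key : ∀ s : ℝ, ((Dop S (ρ s)) Set.univ).toReal ≤ ξ * Real.exp (-1) := by
    intro s
    have := hfin s
    exact Dop_univ_le hS hξ hτm hτ0 hupp (ρ s)
  set C := (ν Set.univ).toReal - ξ * Real.exp (-1) with hC
  have hCpos : 0 < C := by
    rw [hC]
    nlinarith [hν]
  have hlow : ∀ t : ℝ, 0 ≤ t → t * C ≤ ((ρ t) Set.univ).toReal := by
    intro t ht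
    have hform := heq t ht Set.univ MeasurableSet.univ
    simp only [Measure.coe_zero, Pi.zero_apply, ENNReal.toReal_zero] at hform
    have hint : ∫ s in (0:ℝ)..t, ((Dop S (ρ s)) Set.univ).toReal
        ≤ t * (ξ * Real.exp (-1)) := by
      by_cases hI : IntervalIntegrable
          (fun s => ((Dop S (ρ s)) Set.univ).toReal) MeasureTheory.volume 0 t
      · have h2 := intervalIntegral.integral_mono_on ht hI intervalIntegrable_const
          (fun s _ => key s)
        rwa [intervalIntegral.integral_const, sub_zero, smul_eq_mul] at h2
      · rw [intervalIntegral.integral_undef hI]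
        positivity
    rw [hform, hC, mul_sub]
    linarith [hint]
  refine tendsto_atTop_mono' atTop ?_ (tendsto_id.atTop_mul_const hCpos)
  filter_upwards [eventually_ge_atTop (0:ℝ)] with t ht using hlow t ht

end MSEW
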